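/- Let μ and ν be unit quaternions and λ > 1 a real number such that the traces λμ + ν + μ/λ, (λ²+1/λ²)μ² + ν², and (λ⁴+1/λ⁴)μ⁴ + ν⁴ are all real. Then μ ∈ {1, −1} and ν ∈ {1, −1}. -/

import Mathlib

open Quaternion

theorem stmt5 (μ ν : ℍ[ℝ]) (hμ : ‖μ‖ = 1) (hν : ‖ν‖ = 1) (Λ : ℝ) (hΛ : 1 < Λ)
    (h1 : ∃ r : ℝ, (Λ : ℍ[ℝ]) * μ + ν + μ / (Λ : ℍ[ℝ]) = (r : ℍ[ℝ]))
    (h2 : ∃ r : ℝ, ((Λ ^ 2 + 1 / Λ ^ 2 : ℝ) : ℍ[ℝ]) * μ ^ 2 + ν ^ 2 = (r : ℍ[ℝ]))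
    (h4 : ∃ r : ℝ, ((Λ ^ 4 + 1 / Λ ^ 4 : ℝ) : ℍ[ℝ]) * μ ^ 4 + ν ^ 4 = (r : ℍ[ℝ])) :
    (μ = 1 ∨ μ = -1) ∧ (ν = 1 ∨ ν = -1) := by
  have hΛ0 : (0:ℝ) < Λ := by linarith
  have hinv : Λ * Λ⁻¹ = 1 := mul_inv_cancel₀ hΛ0.ne'
  set a : ℝ := Λ + Λ⁻¹ with ha_def
  have hinv2 : Λ ^ 2 * Λ⁻¹ = Λ := by field_simp
  have ha : 2 < a := by
    rw [ha_def]
    nlinarith [mul_pos (inv_pos.2 hΛ0) (sq_pos_of_ne_zero (by linarith : Λ - 1 ≠ 0)), hinv, hinv2]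
  -- norms
  have nμ : μ.re^2 + μ.imI^2 + μ.imJ^2 + μ.imK^2 = 1 := by
    have := Quaternion.normSq_eq_norm_mul_self μ
    rw [hμ] at this
    simpa [Quaternion.normSq_def', sq] using this
  have nν : ν.re^2 + ν.imI^2 + ν.imJ^2 + ν.imK^2 = 1 := by
    have := Quaternion.normSq_eq_norm_mul_self ν
    rw [hν] at this
    simpa [Quaternion.normSq_def', sq] using this
  -- components of h1
  obtain ⟨r1, hr1⟩ := h1
  rw [div_eq_mul_inv, ← Quaternion.coe_inv] at hr1
  have e1I : ν.imI + a * μ.imI = 0 := by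
    have := congrArg QuaternionAlgebra.imI hr1
    simp only [Quaternion.imI_add, Quaternion.imI_mul, Quaternion.re_coe,
      Quaternion.imI_coe, Quaternion.imJ_coe, Quaternion.imK_coe] at this
    rw [ha_def]; linarith
  have e1J : ν.imJ + a * μ.imJ = 0 := by
    have := congrArg QuaternionAlgebra.imJ hr1
    simp only [Quaternion.imJ_add, Quaternion.imJ_mul, Quaternion.re_coe,
      Quaternion.imI_coe, Quaternion.imJ_coe, Quaternion.imK_coe] at this
    rw [ha_def]; linarith
  have e1K : ν.imK + a * μ.imK = 0 := by
    have := congrArg QuaternionAlgebra.imK hr1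
    simp only [Quaternion.imK_add, Quaternion.imK_mul, Quaternion.re_coe,
      Quaternion.imI_coe, Quaternion.imJ_coe, Quaternion.imK_coe] at this
    rw [ha_def]; linarith
  -- components of h2
  obtain ⟨r2, hr2⟩ := h2
  set a2 : ℝ := Λ ^ 2 + 1 / Λ ^ 2 with ha2_def
  have ha2 : a2 = a^2 - 2 := by
    rw [ha2_def, ha_def]
    field_simp; ring
  have e2I : a2 * (2 * μ.re * μ.imI) + 2 * ν.re * ν.imI = 0 := by
    have := congrArg QuaternionAlgebra.imI hr2
    simp only [pow_two, Quaternion.imI_add, Quaternion.imI_mul, Quaternion.re_mul,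
      Quaternion.re_coe, Quaternion.imI_coe, Quaternion.imJ_coe, Quaternion.imK_coe] at this
    linarith
  have e2J : a2 * (2 * μ.re * μ.imJ) + 2 * ν.re * ν.imJ = 0 := by
    have := congrArg QuaternionAlgebra.imJ hr2
    simp only [pow_two, Quaternion.imJ_add, Quaternion.imJ_mul, Quaternion.re_mul,
      Quaternion.imI_mul, Quaternion.imK_mul,
      Quaternion.re_coe, Quaternion.imI_coe, Quaternion.imJ_coe, Quaternion.imK_coe] at this
    linarith
  have e2K : a2 * (2 * μ.re * μ.imK) + 2 * ν.re * ν.imK = 0 := by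
    have := congrArg QuaternionAlgebra.imK hr2
    simp only [pow_two, Quaternion.imK_add, Quaternion.imK_mul, Quaternion.re_mul,
      Quaternion.imI_mul, Quaternion.imJ_mul,
      Quaternion.re_coe, Quaternion.imI_coe, Quaternion.imJ_coe, Quaternion.imK_coe] at this
    linarith
  clear hr1 hr2 hμ hν h4
  by_cases him : μ.imI = 0 ∧ μ.imJ = 0 ∧ μ.imK = 0
  · obtain ⟨hI, hJ, hK⟩ := him
    rw [hI] at e1I; rw [hJ] at e1J; rw [hK] at e1K
    have wI : ν.imI = 0 := by linarith
    have wJ : ν.imJ = 0 := by linarith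
    have wK : ν.imK = 0 := by linarith
    constructor
    · have : (μ.re - 1) * (μ.re + 1) = 0 := by
        linear_combination nμ - μ.imI * hI - μ.imJ * hJ - μ.imK * hK
      rcases mul_eq_zero.1 this with h | h
      · left
        refine Quaternion.ext _ _ ?_ ?_ ?_ ?_ <;>
          simp only [Quaternion.re_one, Quaternion.imI_one, Quaternion.imJ_one,
            Quaternion.imK_one, hI, hJ, hK] <;> linarith
      · right
        refine Quaternion.ext _ _ ?_ ?_ ?_ ?_ <;>
          simp only [Quaternion.re_neg, Quaternion.imI_neg, Quaternion.imJ_neg,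
            Quaternion.imK_neg, Quaternion.re_one, Quaternion.imI_one, Quaternion.imJ_one,
            Quaternion.imK_one, hI, hJ, hK] <;> linarith
    · have : (ν.re - 1) * (ν.re + 1) = 0 := by
        linear_combination nν - ν.imI * wI - ν.imJ * wJ - ν.imK * wK
      rcases mul_eq_zero.1 this with h | h
      · left
        refine Quaternion.ext _ _ ?_ ?_ ?_ ?_ <;>
          simp only [Quaternion.re_one, Quaternion.imI_one, Quaternion.imJ_one,
            Quaternion.imK_one, wI, wJ, wK] <;> linarith
      · right
        refine Quaternion.ext _ _ ?_ ?_ ?_ ?_ <;>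
          simp only [Quaternion.re_neg, Quaternion.imI_neg, Quaternion.imJ_neg,
            Quaternion.imK_neg, Quaternion.re_one, Quaternion.imI_one, Quaternion.imJ_one,
            Quaternion.imK_one, wI, wJ, wK] <;> linarith
  · exfalso
    set s : ℝ := μ.imI^2 + μ.imJ^2 + μ.imK^2 with hs_def
    have hs : 0 < s := by
      rw [hs_def]
      rcases not_and_or.1 him with h | h'
      · have := sq_pos_of_ne_zero h
        linarith [sq_nonneg μ.imJ, sq_nonneg μ.imK]
      · rcases not_and_or.1 h' with h | h
        · have := sq_pos_of_ne_zero h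
          linarith [sq_nonneg μ.imI, sq_nonneg μ.imK]
        · have := sq_pos_of_ne_zero h
          linarith [sq_nonneg μ.imI, sq_nonneg μ.imJ]
    have hkI : (a2 * μ.re - a * ν.re) * μ.imI = 0 := by
      linear_combination e2I / 2 - ν.re * e1I
    have hkJ : (a2 * μ.re - a * ν.re) * μ.imJ = 0 := by
      linear_combination e2J / 2 - ν.re * e1J
    have hkK : (a2 * μ.re - a * ν.re) * μ.imK = 0 := by
      linear_combination e2K / 2 - ν.re * e1K
    have hKs : (a2 * μ.re - a * ν.re) * s = 0 := by
      rw [hs_def]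
      linear_combination μ.imI * hkI + μ.imJ * hkJ + μ.imK * hkK
    have hK : (a^2 - 2) * μ.re = a * ν.re := by
      have := (mul_eq_zero.1 hKs).resolve_right hs.ne'
      rw [ha2] at this; linarith
    have hb : μ.re^2 + s = 1 := by rw [hs_def]; linarith [nμ]
    have hc : ν.re^2 + a^2 * s = 1 := by
      have eI : ν.imI^2 = a^2 * μ.imI^2 := by
        linear_combination (ν.imI - a * μ.imI) * e1I
      have eJ : ν.imJ^2 = a^2 * μ.imJ^2 := by
        linear_combination (ν.imJ - a * μ.imJ) * e1J
      have eK : ν.imK^2 = a^2 * μ.imK^2 := by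
        linear_combination (ν.imK - a * μ.imK) * e1K
      rw [hs_def]
      linear_combination nν - eI - eJ - eK
    have hK2 : (a^2-2)^2 * μ.re^2 = a^2 * ν.re^2 := by
      linear_combination ((a^2-2) * μ.re + a * ν.re) * hK
    have key : (a^2-1) * (a^2-4+4*s) = 0 := by
      linear_combination hK2 - (a^2-2)^2 * hb + a^2 * hc
    have haa : (2:ℝ) * 2 < a * a := mul_lt_mul' ha.le ha (by norm_num) (by linarith)
    have hpos : (0:ℝ) < (a^2-1) * (a^2-4+4*s) :=
      mul_pos (by linarith [haa]) (by linarith [haa, hs])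
    linarith [key, hpos]
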